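/- Let $P \subset \mathbb{R}^d$ be a compact convex polytope with vertices $a_1,\dots,a_n$ and nonempty interior. For each $x$ in the interior $P^o$, there exists a unique tuple $(p_1(x),\dots,p_n(x))$ of positive numbers with $\sum_i p_i(x) = 1$, $\sum_i p_i(x) a_i = x$, and $\sum_i \ln p_i(x) = U(x)$, where $U(x)$ is the supremum of $\sum_i \ln p_i$ over all such positive representations. -/

import Mathlib

open Finset

/-- The entropy function of a polytope with vertices `a 1, …, a n`:
`U(x) = sup { ∑ᵢ ln pᵢ : pᵢ > 0, ∑ pᵢ = 1, ∑ pᵢ aᵢ = x }`. -/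
noncomputable def entropyU {d n : ℕ} (a : Fin n → EuclideanSpace ℝ (Fin d))
    (x : EuclideanSpace ℝ (Fin d)) : ℝ :=
  sSup {s | ∃ p : Fin n → ℝ, (∀ i, 0 < p i) ∧ ∑ i, p i = 1 ∧
    ∑ i, p i • a i = x ∧ s = ∑ i, Real.log (p i)}

/-- For each interior point `x` there is a unique positive tuple `p` with
`∑ pᵢ = 1`, `∑ pᵢ aᵢ = x` achieving the entropy supremum `U(x)`. -/
private lemma rep_lemma {d n : ℕ} (a : Fin n → EuclideanSpace ℝ (Fin d))
    (ha : Function.Injective a)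
    (x : EuclideanSpace ℝ (Fin d)) (hx : x ∈ convexHull ℝ (Set.range a)) :
    ∃ w : Fin n → ℝ, (∀ i, 0 ≤ w i) ∧ ∑ i, w i = 1 ∧ ∑ i, w i • a i = x := by
  classical
  have hr : Set.range a = ((Finset.univ.image a : Finset (EuclideanSpace ℝ (Fin d))) : Set _) := by
    simp [Set.image_univ]
  rw [hr, Finset.mem_convexHull'] at hx
  obtain ⟨w, hw0, hw1, hwx⟩ := hx
  have hinj : ∀ i ∈ Finset.univ, ∀ j ∈ Finset.univ, a i = a j → i = j := by
    intro i _ j _ h; exact ha h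
  refine ⟨fun i => w (a i), fun i => hw0 _ (by simp), ?_, ?_⟩
  · rw [← hw1, Finset.sum_image hinj]
  · rw [← hwx, Finset.sum_image hinj]

private lemma pos_rep {d n : ℕ} (hn : 0 < n) (a : Fin n → EuclideanSpace ℝ (Fin d))
    (ha : Function.Injective a)
    (x : EuclideanSpace ℝ (Fin d)) (hx : x ∈ interior (convexHull ℝ (Set.range a))) :
    ∃ p : Fin n → ℝ, (∀ i, 0 < p i) ∧ ∑ i, p i = 1 ∧ ∑ i, p i • a i = x := by
  obtain ⟨ε, hε, hball⟩ := Metric.isOpen_iff.mp isOpen_interior x hx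
  set s : EuclideanSpace ℝ (Fin d) := ∑ i, a i with hs
  set c : EuclideanSpace ℝ (Fin d) := (n : ℝ)⁻¹ • s with hc
  set t : ℝ := ε / (2 * (‖x - c‖ + 1)) with ht
  have hnorm_pos : (0:ℝ) < ‖x - c‖ + 1 := by positivity
  have ht0 : 0 < t := by positivity
  set y : EuclideanSpace ℝ (Fin d) := x + t • (x - c) with hy
  have hyP : y ∈ convexHull ℝ (Set.range a) := by
    have : y ∈ Metric.ball x ε := by
      rw [Metric.mem_ball, dist_eq_norm]
      have : y - x = t • (x - c) := by rw [hy]; abel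
      rw [this, norm_smul, Real.norm_eq_abs, abs_of_pos ht0]
      have heq : t * (‖x - c‖ + 1) = ε / 2 := by rw [ht]; field_simp
      have hle : t * ‖x - c‖ ≤ t * (‖x - c‖ + 1) :=
        mul_le_mul_of_nonneg_left (by linarith) ht0.le
      linarith
    exact interior_subset (hball this)
  obtain ⟨w, hw0, hw1, hwx⟩ := rep_lemma a ha y hyP
  have h1t : (0:ℝ) < 1 + t := by linarith
  have hncast : (0:ℝ) < (n : ℝ) := by exact_mod_cast hn
  refine ⟨fun i => (1 + t)⁻¹ * w i + (1 + t)⁻¹ * t * (n : ℝ)⁻¹, fun i => ?_, ?_, ?_⟩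
  · have h1 : 0 ≤ (1 + t)⁻¹ * w i := mul_nonneg (inv_nonneg.2 h1t.le) (hw0 i)
    have h2 : 0 < (1 + t)⁻¹ * t * (n : ℝ)⁻¹ := by positivity
    linarith
  · rw [Finset.sum_add_distrib, ← Finset.mul_sum, hw1, Finset.sum_const, Finset.card_univ,
      Fintype.card_fin, nsmul_eq_mul]
    field_simp
  · have expand : ∀ i, ((1 + t)⁻¹ * w i + (1 + t)⁻¹ * t * (n : ℝ)⁻¹) • a i
        = (1 + t)⁻¹ • (w i • a i) + ((1 + t)⁻¹ * t * (n : ℝ)⁻¹) • a i := by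
      intro i; rw [add_smul, smul_smul]
    rw [Finset.sum_congr rfl (fun i _ => expand i), Finset.sum_add_distrib,
      ← Finset.smul_sum, ← Finset.smul_sum, hwx, ← hs]
    rw [hy, hc]
    match_scalars
    field_simp
    ring

theorem stmt_6 {d n : ℕ} (hn : 2 ≤ n) (a : Fin n → EuclideanSpace ℝ (Fin d))
    (ha : Function.Injective a)
    (P : Set (EuclideanSpace ℝ (Fin d)))
    (hP : P = convexHull ℝ (Set.range a))
    (hvert : ∀ i, a i ∈ Set.extremePoints ℝ P)
    (hint : (interior P).Nonempty) :
    ∀ x ∈ interior P, ∃! p : Fin n → ℝ,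
      (∀ i, 0 < p i) ∧ ∑ i, p i = 1 ∧ ∑ i, p i • a i = x ∧
      ∑ i, Real.log (p i) = entropyU a x := by
  intro x hx
  subst hP
  obtain ⟨q, hq0, hq1, hqx⟩ := pos_rep (by omega) a ha x hx
  set f : (Fin n → ℝ) → ℝ := fun p => ∑ i, Real.log (p i) with hf
  -- any feasible vector has entries ≤ 1
  have key_le_one : ∀ (p : Fin n → ℝ), (∀ i, 0 < p i) → ∑ i, p i = 1 → ∀ i, p i ≤ 1 := by
    intro p hp hs i
    have := Finset.single_le_sum (f := p) (fun j _ => (hp j).le) (Finset.mem_univ i)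
    linarith [this, hs.symm ▸ this]
  -- value ≤ log of a single entry
  have key_single : ∀ (p : Fin n → ℝ), (∀ i, 0 < p i) → ∑ i, p i = 1 →
      ∀ i, f p ≤ Real.log (p i) := by
    intro p hp hs i
    have hsplit := Finset.sum_erase_add Finset.univ (fun j => Real.log (p j)) (Finset.mem_univ i)
    have hrest : ∑ j ∈ Finset.univ.erase i, Real.log (p j) ≤ 0 :=
      Finset.sum_nonpos fun j _ => Real.log_nonpos (hp j).le (key_le_one p hp hs j)
    simp only [hf]
    linarith
  set v0 : ℝ := f q with hv0
  set ε : ℝ := Real.exp (v0 - 1) with hεdef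
  have hε : 0 < ε := Real.exp_pos _
  have hεq : ∀ i, ε < q i := by
    intro i
    have h1 : v0 - 1 < Real.log (q i) := by
      have := key_single q hq0 hq1 i; simp only [hv0]; linarith
    calc ε < Real.exp (Real.log (q i)) := Real.exp_lt_exp.2 h1
      _ = q i := Real.exp_log (hq0 i)
  set K : Set (Fin n → ℝ) :=
    {p | (∀ i, ε ≤ p i) ∧ ∑ i, p i = 1 ∧ ∑ i, p i • a i = x} with hK
  have hqK : q ∈ K := ⟨fun i => (hεq i).le, hq1, hqx⟩
  have hKclosed : IsClosed K := by
    have h1 : IsClosed {p : Fin n → ℝ | ∀ i, ε ≤ p i} := by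
      have : {p : Fin n → ℝ | ∀ i, ε ≤ p i} = ⋂ i, {p | ε ≤ p i} := by
        ext p; simp
      rw [this]
      exact isClosed_iInter fun i => isClosed_le continuous_const (continuous_apply i)
    have h2 : IsClosed {p : Fin n → ℝ | ∑ i, p i = 1} :=
      isClosed_eq (continuous_finset_sum _ fun i _ => continuous_apply i) continuous_const
    have h3 : IsClosed {p : Fin n → ℝ | ∑ i, p i • a i = x} :=
      isClosed_eq (continuous_finset_sum _ fun i _ => (continuous_apply i).smul continuous_const)
        continuous_const
    have : K = ({p : Fin n → ℝ | ∀ i, ε ≤ p i} ∩ {p | ∑ i, p i = 1}) ∩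
        {p | ∑ i, p i • a i = x} := by
      ext p; simp [hK, and_assoc]
    rw [this]
    exact (h1.inter h2).inter h3
  have hKcompact : IsCompact K := by
    refine (isCompact_univ_pi fun _ : Fin n => isCompact_Icc (a := ε) (b := 1)).of_isClosed_subset
      hKclosed ?_
    intro p hp
    have hple : ∀ i, p i ≤ 1 := key_le_one p (fun i => lt_of_lt_of_le hε (hp.1 i)) hp.2.1
    intro i _
    exact ⟨hp.1 i, hple i⟩
  have hfcont : ContinuousOn f K := by
    apply continuousOn_finset_sum
    intro i _
    apply Real.continuousOn_log.comp (continuous_apply i).continuousOn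
    intro p hp
    exact fun h0 => absurd (h0 ▸ hp.1 i) (not_le.2 hε)
  obtain ⟨pm, hpmK, hmax⟩ := hKcompact.exists_isMaxOn ⟨q, hqK⟩ hfcont
  set S : Set ℝ := {s | ∃ p : Fin n → ℝ, (∀ i, 0 < p i) ∧ ∑ i, p i = 1 ∧
    ∑ i, p i • a i = x ∧ s = ∑ i, Real.log (p i)} with hS
  have hpm0 : ∀ i, 0 < pm i := fun i => lt_of_lt_of_le hε (hpmK.1 i)
  have hub : ∀ s ∈ S, s ≤ f pm := by
    rintro s ⟨p, hp0, hp1, hpx, rfl⟩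
    by_cases hcase : ∀ i, ε ≤ p i
    · exact hmax ⟨hcase, hp1, hpx⟩
    · push_neg at hcase
      obtain ⟨i, hi⟩ := hcase
      have h1 : f p ≤ Real.log (p i) := key_single p hp0 hp1 i
      have h2 : Real.log (p i) < v0 - 1 := by
        have := Real.log_lt_log (hp0 i) hi
        rwa [hεdef, Real.log_exp] at this
      have h3 : v0 ≤ f pm := hmax hqK
      simp only [hf] at h1 ⊢
      linarith
  have hmem : f pm ∈ S := ⟨pm, hpm0, hpmK.2.1, hpmK.2.2, rfl⟩
  have hU : entropyU a x = f pm := IsGreatest.csSup_eq ⟨hmem, hub⟩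
  refine ⟨pm, ⟨hpm0, hpmK.2.1, hpmK.2.2, by rw [hU]⟩, ?_⟩
  rintro y ⟨hy0, hy1, hyx, hyU⟩
  by_contra hne
  obtain ⟨j, hj⟩ : ∃ j, y j ≠ pm j := Function.ne_iff.1 hne
  set m : Fin n → ℝ := fun i => (y i + pm i) / 2 with hm
  have hm0 : ∀ i, 0 < m i := fun i => by
    have := hy0 i; have := hpm0 i; simp only [hm]; linarith
  have hm1 : ∑ i, m i = 1 := by
    simp only [hm]
    rw [← Finset.sum_div, Finset.sum_add_distrib, hy1, hpmK.2.1]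
    norm_num
  have hmx : ∑ i, m i • a i = x := by
    have expand : ∀ i, m i • a i = (2:ℝ)⁻¹ • (y i • a i) + (2:ℝ)⁻¹ • (pm i • a i) := by
      intro i
      simp only [hm, smul_smul]
      rw [← add_smul]
      congr 1
      ring
    rw [Finset.sum_congr rfl fun i _ => expand i, Finset.sum_add_distrib,
      ← Finset.smul_sum, ← Finset.smul_sum, hyx, hpmK.2.2, ← add_smul]
    norm_num
  have hfm_le : f m ≤ f pm := hub (f m) ⟨m, hm0, hm1, hmx, rfl⟩
  have hstrict : f pm < f m := by
    have hyval : f y = f pm := hyU.trans hU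
    have hterm_le : ∀ i ∈ Finset.univ,
        (Real.log (y i) + Real.log (pm i)) / 2 ≤ Real.log (m i) := by
      intro i _
      have hc := strictConcaveOn_log_Ioi.concaveOn.2 (Set.mem_Ioi.2 (hy0 i))
        (Set.mem_Ioi.2 (hpm0 i)) (by norm_num : (0:ℝ) ≤ 1/2) (by norm_num : (0:ℝ) ≤ 1/2)
        (by norm_num)
      have harg : (1/2 : ℝ) • y i + (1/2 : ℝ) • pm i = m i := by
        simp only [hm, smul_eq_mul]; ring
      rw [harg] at hc
      simp only [smul_eq_mul] at hc
      linarith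
    have hterm_lt : (Real.log (y j) + Real.log (pm j)) / 2 < Real.log (m j) := by
      have hc := strictConcaveOn_log_Ioi.2 (Set.mem_Ioi.2 (hy0 j))
        (Set.mem_Ioi.2 (hpm0 j)) hj (by norm_num : (0:ℝ) < 1/2) (by norm_num : (0:ℝ) < 1/2)
        (by norm_num)
      have harg : (1/2 : ℝ) • y j + (1/2 : ℝ) • pm j = m j := by
        simp only [hm, smul_eq_mul]; ring
      rw [harg] at hc
      simp only [smul_eq_mul] at hc
      linarith
    have hsum : ∑ i, (Real.log (y i) + Real.log (pm i)) / 2 < ∑ i, Real.log (m i) :=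
      Finset.sum_lt_sum hterm_le ⟨j, Finset.mem_univ j, hterm_lt⟩
    have hlhs : ∑ i, (Real.log (y i) + Real.log (pm i)) / 2 = f pm := by
      rw [← Finset.sum_div, Finset.sum_add_distrib]
      simp only [hf] at hyval ⊢
      rw [hyval]
      ring
    simp only [hf]
    linarith [hlhs ▸ hsum]
  linarith
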